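/- For every linear subvariety Π ⊆ ℝ^k × ℝ^k of codimension 1, the number of distinct linear forms obtained by restricting the forms in Ψ to Π is at least (k+1)·2^{k−2}. -/

import Mathlib

def psiVI (k : ℕ) (v : Fin k) (I : Finset (Fin k)) (x y : Fin k → ℝ) : ℝ :=
  ∑ i : Fin k, (if i ∈ I then ((v : ℝ) - (i : ℝ)) * x i else ((v : ℝ) - (i : ℝ)) * y i)

open Finset

/-- x-coefficients of ψ_{v,I}. -/
def cxv {k : ℕ} (p : Fin k × Finset (Fin k)) (i : Fin k) : ℝ :=
  if i ∈ p.2 then (p.1 : ℝ) - i else 0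

/-- y-coefficients of ψ_{v,I}. -/
def cyv {k : ℕ} (p : Fin k × Finset (Fin k)) (i : Fin k) : ℝ :=
  if i ∈ p.2 then 0 else (p.1 : ℝ) - i

/-- The difference of the two forms is proportional (with ratio l) to the
fixed functional with coefficients (α, β). -/
def RelF {k : ℕ} (α β : Fin k → ℝ) (p q : Fin k × Finset (Fin k)) : Prop :=
  ∃ l : ℝ, ∀ i, cxv p i - cxv q i = l * α i ∧ cyv p i - cyv q i = l * β i

noncomputable def psiL (k : ℕ) (v : Fin k) (I : Finset (Fin k)) :
    ((Fin k → ℝ) × (Fin k → ℝ)) →ₗ[ℝ] ℝ where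
  toFun z := psiVI k v I z.1 z.2
  map_add' z w := by
    simp only [psiVI]
    rw [← Finset.sum_add_distrib]
    refine Finset.sum_congr rfl fun i _ => ?_
    by_cases h : i ∈ I <;> simp [h] <;> ring
  map_smul' c z := by
    simp only [psiVI, RingHom.id_apply, smul_eq_mul]
    rw [Finset.mul_sum]
    refine Finset.sum_congr rfl fun i _ => ?_
    by_cases h : i ∈ I <;> simp [h] <;> ring

lemma psiVI_single_left (k : ℕ) (v : Fin k) (I : Finset (Fin k)) (i : Fin k) :
    psiVI k v I (Pi.single i 1) 0 = if i ∈ I then (v:ℝ) - i else 0 := by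
  unfold psiVI
  rw [Finset.sum_eq_single i]
  · by_cases h : i ∈ I <;> simp [h]
  · intro j _ hj
    by_cases h : j ∈ I <;> simp [h, Pi.single_eq_of_ne hj]
  · simp

lemma psiVI_single_right (k : ℕ) (v : Fin k) (I : Finset (Fin k)) (i : Fin k) :
    psiVI k v I 0 (Pi.single i 1) = if i ∈ I then 0 else (v:ℝ) - i := by
  unfold psiVI
  rw [Finset.sum_eq_single i]
  · by_cases h : i ∈ I <;> simp [h]
  · intro j _ hj
    by_cases h : j ∈ I <;> simp [h, Pi.single_eq_of_ne hj]
  · simp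

lemma fin_cast_inj {k : ℕ} {v w : Fin k} (h : (v:ℝ) = w) : v = w := by
  have : (v.val : ℝ) = w.val := by exact_mod_cast h
  exact Fin.ext (by exact_mod_cast this)

lemma card_filter_mem {k : ℕ} (v : Fin k) :
    (univ.filter fun I : Finset (Fin k) => v ∈ I).card = 2^(k-1) := by
  classical
  have : (univ.filter fun I : Finset (Fin k) => v ∈ I).card
      = ((univ.erase v).powerset).card := by
    refine Finset.card_bij' (fun I _ => I.erase v) (fun A _ => insert v A) ?_ ?_ ?_ ?_
    · intro I hI
      simp only [mem_powerset]
      intro i hi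
      simp only [mem_erase] at hi ⊢
      exact ⟨hi.1, mem_univ _⟩
    · intro A hA
      simp only [mem_filter, mem_univ, true_and]
      exact mem_insert_self _ _
    · intro I hI
      simp only [mem_filter] at hI
      exact Finset.insert_erase hI.2
    · intro A hA
      simp only [mem_powerset] at hA
      refine Finset.erase_insert fun hv => ?_
      have := hA hv
      simp at this
  rw [this, Finset.card_powerset, Finset.card_erase_of_mem (mem_univ v), Finset.card_univ,
    Fintype.card_fin]

lemma card_S_filter {k : ℕ} (t : Finset (Fin k)) :
    (univ.filter fun p : Fin k × Finset (Fin k) => p.1 ∈ t ∧ p.1 ∈ p.2).card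
      = t.card * 2^(k-1) := by
  classical
  have he : (univ.filter fun p : Fin k × Finset (Fin k) => p.1 ∈ t ∧ p.1 ∈ p.2)
      = t.biUnion (fun v => (univ.filter fun I : Finset (Fin k) => v ∈ I).image (fun I => (v, I))) := by
    ext p
    simp only [mem_filter, mem_univ, true_and, mem_biUnion, mem_image]
    constructor
    · rintro ⟨h1, h2⟩
      exact ⟨p.1, h1, p.2, by simpa using h2, rfl⟩
    · rintro ⟨v, hv, I, hI, rfl⟩
      exact ⟨hv, by simpa using hI⟩
  rw [he, Finset.card_biUnion]
  · rw [Finset.sum_congr rfl (fun v _ => ?_), Finset.sum_const, smul_eq_mul]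
    rw [Finset.card_image_of_injective _ (fun a b h => by simpa using congrArg Prod.snd h), card_filter_mem]
  · intro x hx y hy hxy
    simp only [Finset.disjoint_left, mem_image]
    rintro a ⟨I, hI, rfl⟩ ⟨J, hJ, hJa⟩
    exact hxy (by simpa using (congrArg Prod.fst hJa).symm)

lemma card_le_of_pairs {γ X : Type*} [DecidableEq γ] [DecidableEq X] [Nonempty γ]
    (s : Finset γ) (g : γ → X) (t : Finset (γ × γ))
    (h : ∀ p ∈ s, ∀ q ∈ s, p ≠ q → g p = g q → (p, q) ∈ t) :
    2 * s.card ≤ 2 * (s.image g).card + t.card := by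
  classical
  set r : X → γ := fun x => if hx : ∃ p ∈ s, g p = x then hx.choose else Classical.arbitrary γ
    with hr_def
  have hr : ∀ x ∈ s.image g, r x ∈ s ∧ g (r x) = x := by
    intro x hx
    rw [mem_image] at hx
    obtain ⟨p, hp, hpx⟩ := hx
    have hex : ∃ p ∈ s, g p = x := ⟨p, hp, hpx⟩
    simp only [hr_def, dif_pos hex]
    exact ⟨hex.choose_spec.1, hex.choose_spec.2⟩
  set D := s.filter fun p => p ≠ r (g p) with hD_def
  have hmemD : ∀ p ∈ s, p ∉ D → p = r (g p) := by
    intro p hp hpD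
    by_contra hne
    exact hpD (mem_filter.mpr ⟨hp, hne⟩)
  have h1 : (s \ D).card ≤ (s.image g).card := by
    refine Finset.card_le_card_of_injOn g (fun p hp => mem_image_of_mem g (mem_sdiff.mp hp).1) ?_
    intro p hp q hq hpq
    have hp' := mem_sdiff.mp hp
    have hq' := mem_sdiff.mp hq
    rw [hmemD p hp'.1 hp'.2, hmemD q hq'.1 hq'.2, hpq]
  have h2 : (s \ D).card + D.card = s.card :=
    Finset.card_sdiff_add_card_eq_card (filter_subset _ _)
  set F := D.image fun p => (p, r (g p)) with hF_def
  set R := D.image fun p => (r (g p), p) with hR_def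
  have hFc : F.card = D.card :=
    Finset.card_image_of_injOn (fun a _ b _ hab => (congrArg Prod.fst hab))
  have hRc : R.card = D.card :=
    Finset.card_image_of_injOn (fun a _ b _ hab => (congrArg Prod.snd hab))
  have hDs : ∀ p ∈ D, p ∈ s ∧ p ≠ r (g p) ∧ r (g p) ∈ s ∧ g (r (g p)) = g p := by
    intro p hp
    have hp' := mem_filter.mp hp
    have := hr (g p) (mem_image_of_mem g hp'.1)
    exact ⟨hp'.1, hp'.2, this.1, this.2⟩
  have hFt : F ⊆ t := by
    intro e he
    rw [hF_def, mem_image] at he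
    obtain ⟨p, hp, rfl⟩ := he
    obtain ⟨h1', h2', h3', h4'⟩ := hDs p hp
    exact h p h1' _ h3' h2' h4'.symm
  have hRt : R ⊆ t := by
    intro e he
    rw [hR_def, mem_image] at he
    obtain ⟨p, hp, rfl⟩ := he
    obtain ⟨h1', h2', h3', h4'⟩ := hDs p hp
    exact h _ h3' p h1' (fun hh => h2' hh.symm) h4'
  have hdisj : Disjoint F R := by
    rw [Finset.disjoint_left]
    rintro e heF heR
    rw [hF_def, mem_image] at heF
    rw [hR_def, mem_image] at heR
    obtain ⟨p, hp, rfl⟩ := heF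
    obtain ⟨q, hq, hqe⟩ := heR
    obtain ⟨hp1, hp2, hp3, hp4⟩ := hDs p hp
    have h5 : p = r (g q) := (congrArg Prod.fst hqe).symm
    have h6 : r (g p) = q := (congrArg Prod.snd hqe).symm
    obtain ⟨hq1, hq2, hq3, hq4⟩ := hDs q hq
    have hgg : g p = g q := by rw [h5]; exact hq4
    apply hp2
    rw [hgg]; exact h5
  calc 2 * s.card = 2 * (s \ D).card + 2 * D.card := by omega
    _ ≤ 2 * (s.image g).card + t.card := by
        have : F.card + R.card ≤ t.card := by
          rw [← Finset.card_union_of_disjoint hdisj]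
          exact Finset.card_le_card (Finset.union_subset hFt hRt)
        omega

lemma sum_coeff {k : ℕ} (p : Fin k × Finset (Fin k)) (i : Fin k) :
    cxv p i + cyv p i = (p.1:ℝ) - i := by
  unfold cxv cyv; split <;> ring

lemma cxv_eq {k : ℕ} (p : Fin k × Finset (Fin k)) (i : Fin k) :
    cxv p i = ((p.1:ℝ) - i) * (if i ∈ p.2 then (1:ℝ) else 0) := by
  unfold cxv; split <;> ring

lemma coeff_inj {k : ℕ} {p q : Fin k × Finset (Fin k)} (hp : p.1 ∈ p.2) (hq : q.1 ∈ q.2)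
    (hx : ∀ i, cxv p i = cxv q i) (hy : ∀ i, cyv p i = cyv q i) : p = q := by
  have hv : p.1 = q.1 := by
    refine fin_cast_inj ?_
    have h1 := sum_coeff p p.1
    have h2 := sum_coeff q p.1
    rw [hx p.1, hy p.1] at h1
    have := h1.symm.trans h2
    linarith
  have hI : p.2 = q.2 := by
    ext i
    by_cases hiv : i = p.1
    · subst hiv
      have h2 : p.1 ∈ q.2 := hv ▸ hq
      simp [hp, h2]
    · have hi : ((q.1:ℝ) - i) ≠ 0 := by
        intro h
        apply hiv
        rw [hv]
        exact fin_cast_inj (by linarith)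
      have hxi := hx i
      unfold cxv at hxi
      rw [hv] at hxi
      constructor
      · intro hmem
        rw [if_pos hmem] at hxi
        by_contra hmem2
        rw [if_neg hmem2] at hxi
        exact hi (by linarith)
      · intro hmem
        rw [if_pos hmem] at hxi
        by_contra hmem2
        rw [if_neg hmem2] at hxi
        exact hi (by linarith)
  exact Prod.ext hv hI

/-- Determination lemma for Case A (constant nonzero coordinate sums). -/
lemma detA {v v' i a a2 b b2 : ℝ} (hvv' : v ≠ v')
    (hmid : 2*i = v + v' → a = a2)
    (ha : a = 0 ∨ a = 1) (ha2 : a2 = 0 ∨ a2 = 1) (hb : b = 0 ∨ b = 1) (hb2 : b2 = 0 ∨ b2 = 1)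
    (hiv : i = v → a = 1 ∧ a2 = 1) (hiv' : i = v' → b = 1 ∧ b2 = 1)
    (heq : (v - i)*a - (v' - i)*b = (v - i)*a2 - (v' - i)*b2) :
    a = a2 ∧ b = b2 := by
  have heq' : (v - i)*(a - a2) = (v' - i)*(b - b2) := by ring_nf; ring_nf at heq; linarith
  have haa : a = a2 := by
    by_contra hne'
    have hbb : b ≠ b2 := by
      intro hbb
      rw [hbb, sub_self, mul_zero, mul_eq_zero] at heq'
      rcases heq' with h | h
      · rcases hiv (by linarith) with ⟨e1, e2⟩
        exact hne' (e1.trans e2.symm)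
      · exact hne' (by linarith)
    have hs : a - a2 = 1 ∨ a - a2 = -1 := by
      rcases ha with h|h <;> rcases ha2 with h2|h2 <;> subst h h2 <;> simp at hne' ⊢ <;> norm_num
    have ht : b - b2 = 1 ∨ b - b2 = -1 := by
      rcases hb with h|h <;> rcases hb2 with h2|h2 <;> subst h h2 <;> simp at hbb ⊢ <;> norm_num
    rcases hs with h|h <;> rcases ht with h2|h2 <;> rw [h, h2] at heq'
    · exact hvv' (by linarith)
    · exact hne' (hmid (by linarith))
    · exact hne' (hmid (by linarith))
    · exact hvv' (by linarith)
  refine ⟨haa, ?_⟩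
  rw [haa, sub_self, mul_zero] at heq'
  rcases mul_eq_zero.mp heq'.symm with h | h
  · rcases hiv' (by linarith) with ⟨e1, e2⟩
    exact e1.trans e2.symm
  · linarith

/-- Parity-constrained pairs inject into a smaller square. -/
lemma card_G {k : ℕ} (hk : 2 ≤ k) :
    ((univ : Finset (Fin k × Fin k)).filter
      fun r => r.1 ≠ r.2 ∧ (r.1.val + r.2.val) % 2 = 0).card ≤ (k-1) * (k-2) := by
  classical
  have hklt : k - 2 < k - 1 := by omega
  have hcard : ((univ : Finset (Fin (k-1))).offDiag).card = (k-1) * (k-2) := by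
    rw [Finset.offDiag_card, Finset.card_univ, Fintype.card_fin]
    obtain ⟨m, rfl⟩ := Nat.exists_eq_add_of_le hk
    have h1 : 2 + m - 1 = m + 1 := by omega
    have h2 : 2 + m - 2 = m := by omega
    rw [h1, h2]
    have h3 : (m+1)*(m+1) = (m+1)*m + (m+1) := by ring
    omega
  rw [← hcard]
  refine Finset.card_le_card_of_injOn
    (fun r => ((⟨min r.1.val (k-2), by omega⟩ : Fin (k-1)), (⟨min r.2.val (k-2), by omega⟩ : Fin (k-1)))) ?_ ?_
  · intro r hr
    simp only [Finset.mem_coe, mem_filter, mem_univ, true_and] at hr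
    rw [Finset.mem_coe, Finset.mem_offDiag]
    refine ⟨mem_univ _, mem_univ _, ?_⟩
    intro hEq
    rw [Fin.mk.injEq] at hEq
    have h1 : r.1.val ≠ r.2.val := fun h => hr.1 (Fin.ext h)
    have := r.1.isLt; have := r.2.isLt
    have hp := hr.2
    omega
  · intro r hr r' hr' hEq
    simp only [Finset.coe_filter, Set.mem_setOf_eq, mem_univ, true_and] at hr hr'
    dsimp only at hEq
    rw [Prod.mk.injEq, Fin.mk.injEq, Fin.mk.injEq] at hEq
    have h1 : r.1.val ≠ r.2.val := fun h => hr.1 (Fin.ext h)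
    have h2 : r'.1.val ≠ r'.2.val := fun h => hr'.1 (Fin.ext h)
    have := r.1.isLt; have := r.2.isLt; have := r'.1.isLt; have := r'.2.isLt
    have hp := hr.2; have hp' := hr'.2
    have hcc : r.1.val = r'.1.val ∧ r.2.val = r'.2.val := by omega
    have e1 : r.1 = r'.1 := Fin.ext hcc.1
    have e2 : r.2 = r'.2 := Fin.ext hcc.2
    exact Prod.ext e1 e2

open Classical in
theorem count_T {k : ℕ} (hk : 2 ≤ k) (α β : Fin k → ℝ) (hne : ∃ i, α i ≠ 0 ∨ β i ≠ 0) :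
    ((((univ : Finset (Fin k × Finset (Fin k))).filter fun p => p.1 ∈ p.2) ×ˢ
        ((univ : Finset (Fin k × Finset (Fin k))).filter fun p => p.1 ∈ p.2)).filter
      fun e => e.1 ≠ e.2 ∧ RelF α β e.1 e.2).card ≤ (k-1) * 2^(k-1) := by
  classical
  set S := ((univ : Finset (Fin k × Finset (Fin k))).filter fun p => p.1 ∈ p.2) with hS_def
  set T := ((S ×ˢ S).filter fun e => e.1 ≠ e.2 ∧ RelF α β e.1 e.2) with hT_def
  have hTfact : ∀ e ∈ T, ∃ l : ℝ, l ≠ 0 ∧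
      (∀ i, ((e.1.1:ℝ) - i) * (if i ∈ e.1.2 then (1:ℝ) else 0)
          - ((e.2.1:ℝ) - i) * (if i ∈ e.2.2 then (1:ℝ) else 0) = l * α i) ∧
      (∀ i, (e.1.1:ℝ) - e.2.1 = l * (α i + β i)) ∧
      e.1.1 ∈ e.1.2 ∧ e.2.1 ∈ e.2.2 := by
    intro e he
    rw [hT_def, mem_filter, mem_product] at he
    obtain ⟨⟨hp, hq⟩, hne', l, hl⟩ := he
    rw [hS_def, mem_filter] at hp hq
    refine ⟨l, ?_, ?_, ?_, hp.2, hq.2⟩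
    · intro hl0
      subst hl0
      apply hne'
      refine coeff_inj hp.2 hq.2 (fun i => ?_) (fun i => ?_)
      · have h := (hl i).1
        rw [zero_mul] at h
        linarith
      · have h := (hl i).2
        rw [zero_mul] at h
        linarith
    · intro i
      have h := (hl i).1
      rw [cxv_eq, cxv_eq] at h
      linarith
    · intro i
      have h1 := (hl i).1
      have h2 := (hl i).2
      have h3 := sum_coeff e.1 i
      have h4 := sum_coeff e.2 i
      have h5 : l*(α i + β i) = l*α i + l*β i := by ring
      linarith
  by_cases hconst : ∀ i j : Fin k, α i + β i = α j + β j
  · have hk0 : 0 < k := by omega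
    set i0 : Fin k := ⟨0, hk0⟩ with hi0
    set c := α i0 + β i0 with hc_def
    have hsumc : ∀ i, α i + β i = c := fun i => hconst i i0
    by_cases hc : c = 0
    · -- CASE B : all coordinate sums are zero
      have hαne : ∃ i, α i ≠ 0 := by
        obtain ⟨i, hi⟩ := hne
        rcases hi with h | h
        · exact ⟨i, h⟩
        · refine ⟨i, fun h0 => h ?_⟩
          have hs := hsumc i
          rw [hc] at hs
          linarith
      set J := (univ : Finset (Fin k)).filter (fun i => α i ≠ 0) with hJ_def
      have hJne : J.Nonempty := by
        obtain ⟨i, hi⟩ := hαne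
        exact ⟨i, by rw [hJ_def, mem_filter]; exact ⟨mem_univ _, hi⟩⟩
      have hBfact : ∀ e ∈ T, ∃ l : ℝ, l ≠ 0 ∧ e.2.1 = e.1.1 ∧ e.1.1 ∈ e.1.2 ∧ e.1.1 ∈ e.2.2 ∧
          (∀ i, ((e.1.1:ℝ) - i) *
            ((if i ∈ e.1.2 then (1:ℝ) else 0) - (if i ∈ e.2.2 then (1:ℝ) else 0)) = l * α i) := by
        intro e he
        obtain ⟨l, hl0, hx, hs, hm1, hm2⟩ := hTfact e he
        have hvv : (e.1.1:ℝ) = (e.2.1:ℝ) := by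
          have h := hs i0
          rw [hsumc i0, hc, mul_zero] at h
          linarith
        have hv : e.2.1 = e.1.1 := (fin_cast_inj hvv).symm
        refine ⟨l, hl0, hv, hm1, by rw [← hv] at hm1; exact hv ▸ hm2, fun i => ?_⟩
        have h := hx i
        rw [← hvv] at h
        linear_combination h
      have hvnotJ : ∀ e ∈ T, ∀ i ∈ J, (e.1.1:ℝ) ≠ (i:ℝ) ∧ ¬(i ∈ e.1.2 ↔ i ∈ e.2.2) := by
        intro e he i hi
        obtain ⟨l, hl0, hv, hm1, hm2, heq⟩ := hBfact e he
        have hαi : α i ≠ 0 := by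
          rw [hJ_def, mem_filter] at hi
          exact hi.2
        have hne0 : ((e.1.1:ℝ) - i) *
            ((if i ∈ e.1.2 then (1:ℝ) else 0) - (if i ∈ e.2.2 then (1:ℝ) else 0)) ≠ 0 := by
          rw [heq i]
          exact mul_ne_zero hl0 hαi
        constructor
        · intro h
          exact hne0 (by rw [h, sub_self, zero_mul])
        · intro hiff
          apply hne0
          by_cases hmm : i ∈ e.1.2
          · rw [if_pos hmm, if_pos (hiff.mp hmm), sub_self, mul_zero]
          · rw [if_neg hmm, if_neg (fun h2 => hmm (hiff.mpr h2)), sub_self, mul_zero]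
      by_cases hJ1 : J.card = 1
      · -- |J| = 1
        obtain ⟨j, hj⟩ := Finset.card_eq_one.mp hJ1
        have hjJ : j ∈ J := hj ▸ mem_singleton_self j
        have hα0 : ∀ i, i ≠ j → α i = 0 := by
          intro i hij
          by_contra h0
          have hmem : i ∈ J := by rw [hJ_def, mem_filter]; exact ⟨mem_univ _, h0⟩
          rw [hj, mem_singleton] at hmem
          exact hij hmem
        have hchar : ∀ e ∈ T, e.1.1 ≠ j ∧ e.1.1 ∈ e.1.2 ∧ e.2.1 = e.1.1 ∧
            e.2.2 = (if j ∈ e.1.2 then e.1.2.erase j else insert j e.1.2) := by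
          intro e he
          obtain ⟨l, hl0, hv, hm1, hm2, heq⟩ := hBfact e he
          obtain ⟨hvj', hdiff⟩ := hvnotJ e he j hjJ
          have hvj : e.1.1 ≠ j := fun h => hvj' (by rw [h])
          refine ⟨hvj, hm1, hv, ?_⟩
          ext i
          by_cases hij : i = j
          · subst hij
            by_cases hmm : i ∈ e.1.2
            · have hnot : i ∉ e.2.2 := fun h2 => hdiff ⟨fun _ => h2, fun _ => hmm⟩
              rw [if_pos hmm]
              simp [hnot]
            · have hyes : i ∈ e.2.2 := by
                by_contra h2
                exact hdiff ⟨fun h => absurd h hmm, fun h => absurd h h2⟩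
              rw [if_neg hmm]
              simp [hyes]
          · have hαi := hα0 i hij
            have h := heq i
            rw [hαi, mul_zero] at h
            rcases mul_eq_zero.mp h with h2 | h2
            · have hiv : i = e.1.1 := fin_cast_inj (by linarith)
              have m1 : i ∈ e.1.2 := by rw [hiv]; exact hm1
              have m2 : i ∈ e.2.2 := by rw [hiv]; exact hm2
              by_cases hjm : j ∈ e.1.2 <;> simp [hjm, m1, m2, hij]
            · have hiff : (i ∈ e.1.2) ↔ (i ∈ e.2.2) := by
                by_cases m1 : i ∈ e.1.2 <;> by_cases m2 : i ∈ e.2.2 <;>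
                  simp [m1, m2] at h2 ⊢
              by_cases hjm : j ∈ e.1.2 <;> simp [hjm, hij, ← hiff]
        have hinj : T.card ≤ ((univ : Finset (Fin k × Finset (Fin k))).filter
            (fun p => p.1 ∈ (univ.erase j) ∧ p.1 ∈ p.2)).card := by
          refine card_le_card_of_injOn (fun e => e.1) ?_ ?_
          · intro e he
            obtain ⟨hvj, hm1, _, _⟩ := hchar e he
            rw [Finset.mem_coe, mem_filter]
            exact ⟨mem_univ _, by rw [mem_erase]; exact ⟨hvj, mem_univ _⟩, hm1⟩
          · intro e he e' he' hEq
            rw [Finset.mem_coe] at he he'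
            dsimp only at hEq
            obtain ⟨_, _, hv, hch⟩ := hchar e he
            obtain ⟨_, _, hv', hch'⟩ := hchar e' he'
            refine Prod.ext hEq (Prod.ext ?_ ?_)
            · rw [hv, hv', hEq]
            · rw [hch, hch', hEq]
        refine hinj.trans ?_
        rw [card_S_filter (univ.erase j), card_erase_of_mem (mem_univ _), card_univ,
          Fintype.card_fin]
      · -- |J| ≥ 2
        have hJ2 : 2 ≤ J.card := by
          have := Finset.card_pos.mpr hJne
          omega
        obtain ⟨j1, hj1, j2, hj2, hj12⟩ := Finset.one_lt_card.mp (show 1 < J.card by omega)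
        have hα1 : α j1 ≠ 0 := by rw [hJ_def, mem_filter] at hj1; exact hj1.2
        have hα2 : α j2 ≠ 0 := by rw [hJ_def, mem_filter] at hj2; exact hj2.2
        have hj12' : (j1:ℝ) ≠ (j2:ℝ) := fun h => hj12 (fin_cast_inj h)
        rcases Finset.eq_empty_or_nonempty T with hTe | ⟨e0, he0⟩
        · rw [hTe]; simp
        have hJk : J.card ≤ k - 1 := by
          have hsub : J ⊆ univ.erase e0.1.1 := by
            intro i hi
            rw [mem_erase]
            exact ⟨fun h => (hvnotJ e0 he0 i hi).1 (by rw [h]), mem_univ _⟩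
          calc J.card ≤ (univ.erase e0.1.1).card := card_le_card hsub
            _ = k - 1 := by simp
        have hdval : ∀ f ∈ T, ∀ i ∈ J,
            ((if i ∈ f.1.2 then (1:ℝ) else 0) - (if i ∈ f.2.2 then (1:ℝ) else 0) = 1
               ∧ i ∈ f.1.2 ∧ i ∉ f.2.2) ∨
            ((if i ∈ f.1.2 then (1:ℝ) else 0) - (if i ∈ f.2.2 then (1:ℝ) else 0) = -1
               ∧ i ∉ f.1.2 ∧ i ∈ f.2.2) := by
          intro f hf i hi
          have hdiff := (hvnotJ f hf i hi).2
          by_cases m1 : i ∈ f.1.2 <;> by_cases m2 : i ∈ f.2.2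
          · exact absurd ⟨fun _ => m2, fun _ => m1⟩ hdiff
          · left; exact ⟨by rw [if_pos m1, if_neg m2]; ring, m1, m2⟩
          · right; exact ⟨by rw [if_neg m1, if_pos m2]; ring, m1, m2⟩
          · exact absurd ⟨fun h => absurd h m1, fun h => absurd h m2⟩ hdiff
        have hcross : ∀ f ∈ T, ∀ lf : ℝ,
            (∀ i, ((f.1.1:ℝ) - i) * ((if i ∈ f.1.2 then (1:ℝ) else 0)
              - (if i ∈ f.2.2 then (1:ℝ) else 0)) = lf * α i) →
            (((f.1.1:ℝ) - j1) * α j2 = ((f.1.1:ℝ) - j2) * α j1) ∨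
            (((f.1.1:ℝ) - j1) * α j2 = -(((f.1.1:ℝ) - j2) * α j1)) := by
          intro f hf lf heqf
          rcases hdval f hf j1 hj1 with ⟨hd1, _, _⟩ | ⟨hd1, _, _⟩ <;>
            rcases hdval f hf j2 hj2 with ⟨hd2, _, _⟩ | ⟨hd2, _, _⟩
          · left
            have h1 := heqf j1; rw [hd1] at h1
            have h2 := heqf j2; rw [hd2] at h2
            linear_combination α j2 * h1 - α j1 * h2
          · right
            have h1 := heqf j1; rw [hd1] at h1
            have h2 := heqf j2; rw [hd2] at h2
            linear_combination α j2 * h1 - α j1 * h2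
          · right
            have h1 := heqf j1; rw [hd1] at h1
            have h2 := heqf j2; rw [hd2] at h2
            linear_combination α j1 * h2 - α j2 * h1
          · left
            have h1 := heqf j1; rw [hd1] at h1
            have h2 := heqf j2; rw [hd2] at h2
            linear_combination α j1 * h2 - α j2 * h1
        have hinj : T.card ≤ ((univ : Finset Bool) ×ˢ ((univ : Finset Bool) ×ˢ
            ((univ \ J).powerset))).card := by
          refine card_le_card_of_injOn (fun e =>
            ((decide (((e.1.1:ℝ) - j1) * α j2 = ((e.1.1:ℝ) - j2) * α j1)),
             (decide (j1 ∈ e.1.2), e.1.2 \ J))) ?_ ?_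
          · intro e he
            rw [Finset.mem_coe, mem_product]
            refine ⟨mem_univ _, ?_⟩
            rw [mem_product]
            refine ⟨mem_univ _, ?_⟩
            rw [mem_powerset]
            intro x hx
            rw [mem_sdiff] at hx ⊢
            exact ⟨mem_univ _, hx.2⟩
          · intro e he e' he' hEq
            rw [Finset.mem_coe] at he he'
            obtain ⟨l, hl0, hv, hm1, hm2, heq⟩ := hBfact e he
            obtain ⟨l', hl0', hv', hm1', hm2', heq'⟩ := hBfact e' he'
            have hb1 : (((e.1.1:ℝ) - j1) * α j2 = ((e.1.1:ℝ) - j2) * α j1) ↔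
                (((e'.1.1:ℝ) - j1) * α j2 = ((e'.1.1:ℝ) - j2) * α j1) :=
              decide_eq_decide.mp (congrArg (fun z => z.1) hEq)
            have hb2 : (j1 ∈ e.1.2) ↔ (j1 ∈ e'.1.2) :=
              decide_eq_decide.mp (congrArg (fun z => z.2.1) hEq)
            have hK : e.1.2 \ J = e'.1.2 \ J := congrArg (fun z => z.2.2) hEq
            have hvv : e.1.1 = e'.1.1 := by
              rcases hcross e he l heq with hP | hP <;> rcases hcross e' he' l' heq' with hP' | hP'
              · by_contra hc2
                have hrne : (e.1.1:ℝ) ≠ (e'.1.1:ℝ) := fun h => hc2 (fin_cast_inj h)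
                have h3 : ((e.1.1:ℝ) - e'.1.1) * α j2 = ((e.1.1:ℝ) - e'.1.1) * α j1 := by
                  linear_combination hP - hP'
                have hα12 : α j2 = α j1 := mul_left_cancel₀ (sub_ne_zero.mpr hrne) h3
                rw [hα12] at hP
                have := mul_right_cancel₀ hα1 hP
                exact hj12' (by linarith)
              · exfalso
                have hPe' := hb1.mp hP
                have h0 : ((e'.1.1:ℝ) - j2) * α j1 = 0 := by linarith
                rcases mul_eq_zero.mp h0 with h4 | h4
                · have h5 : (e'.1.1:ℝ) = j2 := by linarith
                  rw [h5] at hPe'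
                  have h6 : ((j2:ℝ) - j1) * α j2 = 0 := by linear_combination hPe'
                  rcases mul_eq_zero.mp h6 with h7 | h7
                  · exact hj12' (by linarith)
                  · exact hα2 h7
                · exact hα1 h4
              · exfalso
                have hPe := hb1.mpr hP'
                have h0 : ((e.1.1:ℝ) - j2) * α j1 = 0 := by linarith
                rcases mul_eq_zero.mp h0 with h4 | h4
                · have h5 : (e.1.1:ℝ) = j2 := by linarith
                  rw [h5] at hPe
                  have h6 : ((j2:ℝ) - j1) * α j2 = 0 := by linear_combination hPe
                  rcases mul_eq_zero.mp h6 with h7 | h7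
                  · exact hj12' (by linarith)
                  · exact hα2 h7
                · exact hα1 h4
              · by_contra hc2
                have hrne : (e.1.1:ℝ) ≠ (e'.1.1:ℝ) := fun h => hc2 (fin_cast_inj h)
                have h3 : ((e.1.1:ℝ) - e'.1.1) * α j2 = ((e.1.1:ℝ) - e'.1.1) * (-(α j1)) := by
                  linear_combination hP - hP'
                have hα12 : α j2 = -(α j1) := mul_left_cancel₀ (sub_ne_zero.mpr hrne) h3
                rw [hα12] at hP
                have h4 : ((e.1.1:ℝ) - j1) * α j1 = ((e.1.1:ℝ) - j2) * α j1 := by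
                  linear_combination -hP
                have := mul_right_cancel₀ hα1 h4
                exact hj12' (by linarith)
            have hvvr : (e.1.1:ℝ) = (e'.1.1:ℝ) := by rw [hvv]
            have hl_eq : l = l' := by
              rcases hdval e he j1 hj1 with ⟨hd1, hm, hn⟩ | ⟨hd1, hm, hn⟩ <;>
                rcases hdval e' he' j1 hj1 with ⟨hd1', hm', hn'⟩ | ⟨hd1', hm', hn'⟩
              · have h1 := heq j1; rw [hd1] at h1
                have h2 := heq' j1; rw [hd1'] at h2
                rw [← hvvr] at h2
                exact mul_right_cancel₀ hα1 (h1.symm.trans h2)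
              · exact absurd (hb2.mp hm) hm'
              · exact absurd (hb2.mpr hm') hm
              · have h1 := heq j1; rw [hd1] at h1
                have h2 := heq' j1; rw [hd1'] at h2
                rw [← hvvr] at h2
                exact mul_right_cancel₀ hα1 (h1.symm.trans h2)
            have hkey : ∀ i : Fin k, (i ∈ e.1.2 ↔ i ∈ e'.1.2) ∧ (i ∈ e.2.2 ↔ i ∈ e'.2.2) := by
              intro i
              by_cases hiJ : i ∈ J
              · have hvi : (e.1.1:ℝ) ≠ i := (hvnotJ e he i hiJ).1
                have h1 := heq i
                have h2 := heq' i
                rw [← hvvr, ← hl_eq] at h2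
                have hd := mul_left_cancel₀ (sub_ne_zero.mpr hvi) (h1.trans h2.symm)
                rcases hdval e he i hiJ with ⟨hda, m1, m2⟩ | ⟨hda, m1, m2⟩ <;>
                  rcases hdval e' he' i hiJ with ⟨hdb, m3, m4⟩ | ⟨hdb, m3, m4⟩
                · exact ⟨⟨fun _ => m3, fun _ => m1⟩,
                    ⟨fun h => absurd h m2, fun h => absurd h m4⟩⟩
                · rw [hda, hdb] at hd; norm_num at hd
                · rw [hda, hdb] at hd; norm_num at hd
                · exact ⟨⟨fun h => absurd h m1, fun h => absurd h m3⟩,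
                    ⟨fun _ => m4, fun _ => m2⟩⟩
              · by_cases hiv : i = e.1.1
                · refine ⟨⟨fun _ => ?_, fun _ => ?_⟩, ⟨fun _ => ?_, fun _ => ?_⟩⟩
                  · rw [hiv, hvv]; exact hm1'
                  · rw [hiv]; exact hm1
                  · rw [hiv, hvv]; exact hm2'
                  · rw [hiv]; exact hm2
                · have hαi : α i = 0 := by
                    by_contra h0
                    exact hiJ (by rw [hJ_def, mem_filter]; exact ⟨mem_univ _, h0⟩)
                  have hvi : (e.1.1:ℝ) - i ≠ 0 := by
                    intro h
                    exact hiv (fin_cast_inj (by linarith : (i:ℝ) = (e.1.1:ℝ)))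
                  have h1 := heq i
                  rw [hαi, mul_zero] at h1
                  have h2 := heq' i
                  rw [hαi, mul_zero] at h2
                  rw [← hvvr] at h2
                  have hd1 := (mul_eq_zero.mp h1).resolve_left hvi
                  have hd2 := (mul_eq_zero.mp h2).resolve_left hvi
                  have hiffe : (i ∈ e.1.2) ↔ (i ∈ e.2.2) := by
                    by_cases m1 : i ∈ e.1.2 <;> by_cases m2 : i ∈ e.2.2 <;>
                      simp [m1, m2] at hd1 ⊢
                  have hiffe' : (i ∈ e'.1.2) ↔ (i ∈ e'.2.2) := by
                    by_cases m1 : i ∈ e'.1.2 <;> by_cases m2 : i ∈ e'.2.2 <;>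
                      simp [m1, m2] at hd2 ⊢
                  have hcross2 : (i ∈ e.1.2) ↔ (i ∈ e'.1.2) := by
                    constructor
                    · intro h
                      have hm : i ∈ e.1.2 \ J := mem_sdiff.mpr ⟨h, hiJ⟩
                      rw [hK] at hm
                      exact (mem_sdiff.mp hm).1
                    · intro h
                      have hm : i ∈ e'.1.2 \ J := mem_sdiff.mpr ⟨h, hiJ⟩
                      rw [← hK] at hm
                      exact (mem_sdiff.mp hm).1
                  exact ⟨hcross2, by rw [← hiffe, ← hiffe']; exact hcross2⟩
            have hv2 : e.2.1 = e'.2.1 := by rw [hv, hv', hvv]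
            exact Prod.ext (Prod.ext hvv (Finset.ext fun i => (hkey i).1))
              (Prod.ext hv2 (Finset.ext fun i => (hkey i).2))
        refine hinj.trans ?_
        simp only [card_product, card_powerset, card_sdiff_of_subset (subset_univ J), card_univ,
          Fintype.card_fin, Fintype.card_bool]
        have h1 : (2:ℕ)^(k - J.card) ≤ 2^(k-2) := Nat.pow_le_pow_right (by norm_num) (by omega)
        have h2 : (2:ℕ)^(k-1) = 2*2^(k-2) := by
          have hs : k - 1 = (k-2) + 1 := by omega
          rw [hs, pow_succ]; ring
        have h3 : 2 ≤ k - 1 := by omega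
        calc 2 * (2 * 2^(k - J.card)) ≤ 2 * (2 * 2^(k-2)) :=
              Nat.mul_le_mul_left _ (Nat.mul_le_mul_left _ h1)
          _ = 2 * 2^(k-1) := by rw [h2]
          _ ≤ (k-1) * 2^(k-1) := Nat.mul_le_mul_right _ h3
    · -- CASE A : all coordinate sums equal c ≠ 0
      have hA : ∀ e ∈ T, e.1.1 ≠ e.2.1 := by
        intro e he hv
        obtain ⟨l, hl0, hx, hs, h1, h2⟩ := hTfact e he
        apply hc
        have h := hs i0
        rw [hv, sub_self] at h
        rw [hc_def]
        rcases mul_eq_zero.mp h.symm with h' | h'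
        · exact absurd h' hl0
        · exact h'
      -- the injection into pairs-with-parity-bit
      have hmidlt : ∀ r : Fin k × Fin k, (r.1.val + r.2.val)/2 < k := by
        intro r
        have := r.1.isLt; have := r.2.isLt
        omega
      set Φ : ((Fin k × Finset (Fin k)) × (Fin k × Finset (Fin k))) → (Fin k × Fin k) × Bool :=
        fun e => ((e.1.1, e.2.1),
          if (e.1.1.val + e.2.1.val) % 2 = 0 then
            decide ((⟨(e.1.1.val + e.2.1.val)/2, hmidlt (e.1.1, e.2.1)⟩ : Fin k) ∈ e.1.2)
          else false) with hΦ
      set G := ((univ : Finset (Fin k × Fin k)).filter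
          fun r => r.1 ≠ r.2 ∧ (r.1.val + r.2.val) % 2 = 0) with hG_def
      set C : Finset ((Fin k × Fin k) × Bool) :=
        ((univ : Finset (Fin k)).offDiag ×ˢ ({false} : Finset Bool)) ∪
          (G ×ˢ ({true} : Finset Bool)) with hC_def
      have hTC : T.card ≤ C.card := by
        refine card_le_card_of_injOn Φ ?_ ?_
        · intro e he
          have hvv' := hA e he
          rw [hC_def, Finset.mem_coe, mem_union]
          by_cases hpar : (e.1.1.val + e.2.1.val) % 2 = 0
          · by_cases hbit : (⟨(e.1.1.val + e.2.1.val)/2, hmidlt (e.1.1, e.2.1)⟩ : Fin k) ∈ e.1.2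
            · right
              rw [mem_product]
              refine ⟨?_, by simp [hΦ, hpar, hbit]⟩
              rw [hG_def, mem_filter]
              exact ⟨mem_univ _, hvv', hpar⟩
            · left
              rw [mem_product]
              refine ⟨?_, by simp [hΦ, hpar, hbit]⟩
              rw [Finset.mem_offDiag]
              exact ⟨mem_univ _, mem_univ _, hvv'⟩
          · left
            rw [mem_product]
            refine ⟨?_, by simp [hΦ, hpar]⟩
            rw [Finset.mem_offDiag]
            exact ⟨mem_univ _, mem_univ _, hvv'⟩
        · intro e he e' he' hEq
          rw [Finset.mem_coe] at he he'
          obtain ⟨l, hl0, hx, hs, hm1, hm2⟩ := hTfact e he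
          obtain ⟨l', hl0', hx', hs', hm1', hm2'⟩ := hTfact e' he'
          have hvv' := hA e he
          have h1 : e.1.1 = e'.1.1 := congrArg (fun z => z.1.1) hEq
          have h2 : e.2.1 = e'.2.1 := congrArg (fun z => z.1.2) hEq
          have hbit : (Φ e).2 = (Φ e').2 := congrArg Prod.snd hEq
          have hcast : ((e.1.1 : ℝ)) ≠ (e.2.1 : ℝ) := fun h => hvv' (fin_cast_inj h)
          have hll : l = l' := by
            have ha := hs i0
            have hb := hs' i0
            rw [hsumc i0] at ha hb
            rw [← h1, ← h2] at hb
            exact mul_right_cancel₀ hc (by linarith)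
          have hkey : ∀ i : Fin k,
              ((i ∈ e.1.2 ↔ i ∈ e'.1.2) ∧ (i ∈ e.2.2 ↔ i ∈ e'.2.2)) := by
            intro i
            have hxa := hx i
            have hxb := hx' i
            rw [← h1, ← h2, ← hll] at hxb
            have hmid : 2*(i:ℝ) = (e.1.1:ℝ) + (e.2.1:ℝ) →
                (if i ∈ e.1.2 then (1:ℝ) else 0) = (if i ∈ e'.1.2 then (1:ℝ) else 0) := by
              intro hm
              have hmn : 2 * i.val = e.1.1.val + e.2.1.val := by exact_mod_cast hm
              have hpar : (e.1.1.val + e.2.1.val) % 2 = 0 := by omega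
              have him : i = (⟨(e.1.1.val + e.2.1.val)/2, hmidlt (e.1.1, e.2.1)⟩ : Fin k) :=
                Fin.ext (by simp; omega)
              simp only [hΦ, ← h1, ← h2, if_pos hpar] at hbit
              have hiff := decide_eq_decide.mp hbit
              rw [← him] at hiff
              by_cases hmm : i ∈ e.1.2
              · rw [if_pos hmm, if_pos (hiff.mp hmm)]
              · rw [if_neg hmm, if_neg (fun hmm2 => hmm (hiff.mpr hmm2))]
            have hiv : (i:ℝ) = (e.1.1:ℝ) →
                (if i ∈ e.1.2 then (1:ℝ) else 0) = 1 ∧ (if i ∈ e'.1.2 then (1:ℝ) else 0) = 1 := by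
              intro h
              have hie : i = e.1.1 := fin_cast_inj h
              constructor
              · rw [hie, if_pos hm1]
              · rw [hie, h1, if_pos hm1']
            have hiv' : (i:ℝ) = (e.2.1:ℝ) →
                (if i ∈ e.2.2 then (1:ℝ) else 0) = 1 ∧ (if i ∈ e'.2.2 then (1:ℝ) else 0) = 1 := by
              intro h
              have hie : i = e.2.1 := fin_cast_inj h
              constructor
              · rw [hie, if_pos hm2]
              · rw [hie, h2, if_pos hm2']
            have hdet := detA hcast hmid (by split <;> simp) (by split <;> simp)
              (by split <;> simp) (by split <;> simp) hiv hiv' (hxa.trans hxb.symm)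
            constructor
            · by_cases hmm : i ∈ e.1.2 <;> by_cases hmm' : i ∈ e'.1.2 <;>
                simp [hmm, hmm'] at hdet ⊢
            · by_cases hmm : i ∈ e.2.2 <;> by_cases hmm' : i ∈ e'.2.2 <;>
                simp [hmm, hmm'] at hdet ⊢
          refine Prod.ext (Prod.ext h1 ?_) (Prod.ext h2 ?_)
          · exact Finset.ext fun i => (hkey i).1
          · exact Finset.ext fun i => (hkey i).2
      -- cardinality of the codomain
      have hCc : C.card ≤ k*k - k + (k-1)*(k-2) := by
        calc C.card ≤ ((univ : Finset (Fin k)).offDiag ×ˢ ({false} : Finset Bool)).card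
            + (G ×ˢ ({true} : Finset Bool)).card := by rw [hC_def]; exact card_union_le _ _
          _ = ((univ : Finset (Fin k)).offDiag).card + G.card := by
              simp only [card_product, card_singleton, mul_one]
          _ ≤ k*k - k + (k-1)*(k-2) := by
              have hg := card_G hk
              rw [Finset.offDiag_card, Finset.card_univ, Fintype.card_fin]
              rw [hG_def]
              omega
      refine hTC.trans (hCc.trans ?_)
      obtain ⟨m, rfl⟩ : ∃ m, k = m + 2 := ⟨k - 2, by omega⟩
      have e0 : m+2-1 = m+1 := by omega
      have e1 : m+2-2 = m := by omega
      rw [e0, e1]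
      have e2 : (m+2)*(m+2) - (m+2) = (m+2)*(m+1) := by
        have : (m+2)*(m+2) = (m+2)*(m+1) + (m+2) := by ring
        omega
      rw [e2]
      have e3 : (m+2)*(m+1) + (m+1)*m = (m+1)*(2*(m+1)) := by ring
      rw [e3]
      have e4 : (2:ℕ)^(m+1) = 2*2^m := by rw [pow_succ]; ring
      rw [e4]
      have e5 : m + 1 ≤ 2^m := Nat.lt_two_pow_self (n := m)
      exact Nat.mul_le_mul_left _ (by omega)
  · -- nonconstant coordinate sums : no collisions at all
    push_neg at hconst
    obtain ⟨i, j, hij⟩ := hconst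
    have : T = ∅ := by
      rw [Finset.eq_empty_iff_forall_notMem]
      intro e he
      obtain ⟨l, hl0, hx, hs, h1, h2⟩ := hTfact e he
      have ha := hs i
      have hb := hs j
      have : l * (α i + β i) = l * (α j + β j) := by linarith
      exact hij (mul_left_cancel₀ hl0 this)
    rw [this]
    simp

open Classical in
set_option synthInstance.maxHeartbeats 400000 in
set_option maxHeartbeats 1000000 in
theorem stmt5 (k : ℕ) (hk : 2 ≤ k) (P : Submodule ℝ ((Fin k → ℝ) × (Fin k → ℝ)))
    (hP : Module.finrank ℝ P = 2 * k - 1) :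
    (k + 1) * 2 ^ (k - 2) ≤
      ((Finset.univ.filter fun p : Fin k × Finset (Fin k) => p.1 ∈ p.2).image
        fun p => (fun z : P => psiVI k p.1 p.2 z.val.1 z.val.2)).card := by
  classical
  haveI : Nonempty (Fin k) := ⟨⟨0, by omega⟩⟩
  haveI : FiniteDimensional ℝ (Module.Dual ℝ ((Fin k → ℝ) × (Fin k → ℝ))) := inferInstance
  haveI : Module.Free ℝ P.dualAnnihilator := Module.Free.of_divisionRing (K:=ℝ) (V:=↥P.dualAnnihilator)
  -- the annihilator of P is one-dimensional
  have hA : Module.finrank ℝ P.dualAnnihilator = 1 := by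
    have hV : Module.finrank ℝ ((Fin k → ℝ) × (Fin k → ℝ)) = 2*k := by
      simp [Module.finrank_prod]; ring
    have h1 := Submodule.finrank_quotient_add_finrank P
    have h2 : Module.finrank ℝ (((Fin k → ℝ) × (Fin k → ℝ)) ⧸ P)
        = Module.finrank ℝ P.dualAnnihilator := (Subspace.quotEquivAnnihilator P).finrank_eq
    omega
  obtain ⟨φ, hφ0, hφ⟩ : ∃ φ : Module.Dual ℝ ((Fin k → ℝ) × (Fin k → ℝ)), φ ≠ 0 ∧
      ∀ f ∈ P.dualAnnihilator, ∃ l : ℝ, f = l • φ := by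
    let b : Module.Basis (Fin 1) ℝ P.dualAnnihilator := Module.finBasisOfFinrankEq ℝ _ hA
    refine ⟨(b 0 : P.dualAnnihilator), by simpa using b.ne_zero 0, fun f hf => ?_⟩
    refine ⟨b.repr ⟨f, hf⟩ 0, ?_⟩
    have := b.sum_repr ⟨f, hf⟩
    rw [Fin.sum_univ_one] at this
    have := congrArg (Subtype.val) this
    simpa using this.symm
  have hne0 : ∃ i : Fin k, φ (Pi.single i 1, 0) ≠ 0 ∨ φ (0, Pi.single i 1) ≠ 0 := by
    by_contra hcon
    push_neg at hcon
    refine hφ0 ?_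
    ext i <;> simp [LinearMap.single_apply, (hcon i).1, (hcon i).2]
  set α : Fin k → ℝ := fun i => φ (Pi.single i 1, 0) with hα_def
  set β : Fin k → ℝ := fun i => φ (0, Pi.single i 1) with hβ_def
  have hne : ∃ i, α i ≠ 0 ∨ β i ≠ 0 := hne0
  -- the two counting facts
  set S := ((univ : Finset (Fin k × Finset (Fin k))).filter fun p => p.1 ∈ p.2) with hS_def
  set g := fun p : Fin k × Finset (Fin k) => (fun z : P => psiVI k p.1 p.2 z.val.1 z.val.2)
    with hg_def
  set T := ((S ×ˢ S).filter fun e => e.1 ≠ e.2 ∧ RelF α β e.1 e.2) with hT_def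
  have hST : 2 * S.card ≤ 2 * (S.image g).card + T.card := by
    refine card_le_of_pairs S g T ?_
    intro p hp q hq hpq hgpq
    rw [hT_def, mem_filter, mem_product]
    refine ⟨⟨hp, hq⟩, hpq, ?_⟩
    have hmem : (psiL k p.1 p.2 - psiL k q.1 q.2) ∈ P.dualAnnihilator := by
      rw [Submodule.mem_dualAnnihilator]
      intro w hw
      have := congrFun hgpq ⟨w, hw⟩
      simp only [hg_def] at this
      simp [psiL, this]
    obtain ⟨l, hl⟩ := hφ _ hmem
    refine ⟨l, fun i => ?_⟩
    constructor
    · have := congrArg (fun f : Module.Dual ℝ ((Fin k → ℝ) × (Fin k → ℝ)) =>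
        f ((Pi.single i 1 : Fin k → ℝ), (0 : Fin k → ℝ))) hl
      simpa [psiL, psiVI_single_left, cxv, hα_def] using this
    · have := congrArg (fun f : Module.Dual ℝ ((Fin k → ℝ) × (Fin k → ℝ)) =>
        f ((0 : Fin k → ℝ), (Pi.single i 1 : Fin k → ℝ))) hl
      simpa [psiL, psiVI_single_right, cyv, hβ_def] using this
  have hT : T.card ≤ (k-1) * 2^(k-1) := count_T hk α β hne
  have hS : S.card = k * 2^(k-1) := by
    have := card_S_filter (univ : Finset (Fin k))
    rw [show ((univ : Finset (Fin k × Finset (Fin k))).filter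
        fun p => p.1 ∈ (univ : Finset (Fin k)) ∧ p.1 ∈ p.2) = S by
      rw [hS_def]; exact filter_congr (by simp)] at this
    simpa using this
  have hpow : 2^(k-1) = 2 * 2^(k-2) := by
    rw [← pow_succ']
    congr 1
    omega
  obtain ⟨k', rfl⟩ : ∃ k', k = k' + 2 := ⟨k-2, by omega⟩
  rw [hS] at hST
  have hpow2 : (2:ℕ)^(k'+2-1) = 2 * 2^(k'+2-2) := by
    show (2:ℕ)^(k'+1) = 2*2^k'
    rw [pow_succ]; ring
  rw [hpow2] at hST hT
  simp only [show k'+2-2 = k' from rfl, show k'+2-1 = k'+1 from rfl] at hST hT ⊢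
  nlinarith [hST, hT]
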